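/- Let C be a linear [n,k,d]_q code over F_q with full-rank generator matrix G ∈ F_q^{k×n} such that gcd(d,q) = 1 and the Hamming weight of every codeword of C is congruent to 0 or to d modulo q. Then there exists a column vector x ∈ F_q^k such that the code C' generated by (G | x) ∈ F_q^{k×(n+1)} is an [n+1, k, d+1]_q code all of whose codeword weights are congruent to 0 or to d+1 modulo q. -/

import Mathlib

open Matrix Finset

lemma hammingNorm_eq_sum' {F : Type*} [Zero F] [DecidableEq F] {ι : Type*} [Fintype ι] (x : ι → F) :
    hammingNorm x = ∑ i, if x i ≠ 0 then 1 else 0 := by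
  rw [hammingNorm, Finset.card_filter]

lemma hammingNorm_sum_elim' {F : Type*} [Zero F] [DecidableEq F] {n m : ℕ}
    (f : Fin n → F) (g : Fin m → F) :
    hammingNorm (Sum.elim f g) = hammingNorm f + hammingNorm g := by
  simp only [hammingNorm, Finset.card_filter, Fintype.sum_sum_type, Sum.elim_inl, Sum.elim_inr]
  convert rfl <;> split_ifs <;> simp_all

lemma sum_hammingNorm_zmod' {F : Type*} [Field F] [Fintype F] [DecidableEq F]
    {q n : ℕ} (hq : Fintype.card F = q) (a b : Fin n → F) :
    ∑ lam : F, ((hammingNorm (a + lam • b) : ZMod q)) = - (hammingNorm b : ZMod q) := by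
  have hq0 : ((q : ℕ) : ZMod q) = 0 := ZMod.natCast_self q
  have h1q : 1 ≤ q := hq ▸ Fintype.card_pos
  simp only [hammingNorm_eq_sum', Nat.cast_sum, Nat.cast_ite, Nat.cast_one, Nat.cast_zero,
    Pi.add_apply, Pi.smul_apply, smul_eq_mul]
  rw [Finset.sum_comm]
  have key : ∀ i : Fin n, (∑ lam : F, if a i + lam * b i ≠ 0 then (1 : ZMod q) else 0)
      = if b i ≠ 0 then -1 else 0 := by
    intro i
    by_cases hb : b i = 0
    · rw [if_neg (not_not.2 hb)]
      simp only [hb, mul_zero, add_zero]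
      by_cases ha : a i = 0
      · simp [ha]
      · simp [if_pos ha, Finset.sum_const, Finset.card_univ, hq, hq0]
    · rw [if_pos hb, Finset.sum_boole]
      have hsol : (Finset.univ.filter fun lam : F => ¬(a i + lam * b i ≠ 0))
          = {(-a i) * (b i)⁻¹} := by
        ext lam
        simp only [Finset.mem_filter, Finset.mem_univ, true_and, not_not, Finset.mem_singleton]
        constructor
        · intro h
          field_simp
          linear_combination h
        · intro h
          subst h
          field_simp
          ring
      have hcard := Finset.card_filter_add_card_filter_not
        (s := (Finset.univ : Finset F)) (p := fun lam : F => a i + lam * b i ≠ 0)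
      rw [hsol] at hcard
      simp only [Finset.card_singleton, Finset.card_univ, hq] at hcard
      have : (Finset.univ.filter fun lam : F => a i + lam * b i ≠ 0).card = q - 1 := by omega
      rw [this, Nat.cast_sub h1q, hq0, Nat.cast_one, zero_sub]
  rw [Finset.sum_congr rfl fun i _ => key i]
  rw [← Finset.sum_neg_distrib]
  congr 1
  ext i
  by_cases hb : b i = 0 <;> simp [hb]


/-- **Theorem 1 (Hill–Lizak).**
Let `C` be an `[n,k,d]_q` code with `gcd(d,q) = 1` and with all codeword
weights congruent to `0` or `d` modulo `q`.  Then `C` can be extended to an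
`[n+1, k, d+1]_q` code all of whose weights are congruent to `0` or `d+1`
modulo `q`. -/
theorem hill_lizak_extension
    {F : Type*} [Field F] [Fintype F] [DecidableEq F]
    (q n k d : ℕ) (hq : Fintype.card F = q)
    (G : Matrix (Fin k) (Fin n) F)
    (hG : LinearIndependent F (fun i => G i))
    (hmin : ∀ v : Fin k → F, v ≠ 0 → d ≤ hammingNorm (Matrix.vecMul v G))
    (hex : ∃ v : Fin k → F, v ≠ 0 ∧ hammingNorm (Matrix.vecMul v G) = d)
    (hgcd : Nat.gcd d q = 1)
    (hwts : ∀ v : Fin k → F,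
      hammingNorm (Matrix.vecMul v G) ≡ 0 [MOD q] ∨
      hammingNorm (Matrix.vecMul v G) ≡ d [MOD q]) :
    ∃ x : Fin k → F,
      LinearIndependent F (fun i => Matrix.fromCols G (Matrix.replicateCol (Fin 1) x) i) ∧
      (∀ v : Fin k → F, v ≠ 0 →
        d + 1 ≤ hammingNorm (Matrix.vecMul v (Matrix.fromCols G (Matrix.replicateCol (Fin 1) x)))) ∧
      (∃ v : Fin k → F, v ≠ 0 ∧
        hammingNorm (Matrix.vecMul v (Matrix.fromCols G (Matrix.replicateCol (Fin 1) x))) = d + 1) ∧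
      (∀ v : Fin k → F,
        hammingNorm (Matrix.vecMul v (Matrix.fromCols G (Matrix.replicateCol (Fin 1) x))) ≡ 0 [MOD q] ∨
        hammingNorm (Matrix.vecMul v (Matrix.fromCols G (Matrix.replicateCol (Fin 1) x))) ≡ d + 1 [MOD q]) := by
  classical
  have h2q : 2 ≤ q := by
    have := Fintype.one_lt_card (α := F)
    omega
  set wt : (Fin k → F) → ℕ := fun v => hammingNorm (Matrix.vecMul v G) with hwtdef
  have hd0 : ((d : ℕ) : ZMod q) ≠ 0 := by
    intro h
    rw [ZMod.natCast_eq_zero_iff] at h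
    have h2 : q ∣ Nat.gcd d q := Nat.dvd_gcd h dvd_rfl
    rw [hgcd] at h2
    have := Nat.le_of_dvd one_pos h2
    omega
  have hw : ∀ v, ((wt v : ZMod q) = 0) ∨ ((wt v : ZMod q) = (d : ZMod q)) := by
    intro v
    rcases hwts v with h | h
    · left
      have := (ZMod.natCast_eq_natCast_iff _ _ _).2 h
      simpa using this
    · right
      exact (ZMod.natCast_eq_natCast_iff _ _ _).2 h
  have key : ∀ u w : Fin k → F,
      ∑ lam : F, ((wt (u + lam • w) : ZMod q)) = -(wt w : ZMod q) := by
    intro u w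
    have h1 : ∀ lam : F, wt (u + lam • w) =
        hammingNorm ((Matrix.vecMul u G) + lam • (Matrix.vecMul w G)) := by
      intro lam
      simp [hwtdef, Matrix.add_vecMul, Matrix.smul_vecMul]
    simp only [h1]
    exact sum_hammingNorm_zmod' hq (Matrix.vecMul u G) (Matrix.vecMul w G)
  have hwt0 : wt 0 = 0 := by simp [hwtdef, Matrix.zero_vecMul]
  -- closure under addition
  have hadd : ∀ {u w : Fin k → F}, (wt u : ZMod q) = 0 → (wt w : ZMod q) = 0 →
      (wt (u + w) : ZMod q) = 0 := by
    intro u w hu hv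
    by_contra hne
    have hksum := key u w
    rw [hv, neg_zero] at hksum
    set Sf := Finset.univ.filter (fun lam : F => (wt (u + lam • w) : ZMod q) ≠ 0) with hSf
    have hsum2 : ∑ lam : F, ((wt (u + lam • w) : ZMod q))
        = ∑ lam ∈ Sf, ((wt (u + lam • w) : ZMod q)) :=
      (Finset.sum_filter_ne_zero _).symm
    have hterm : ∀ lam ∈ Sf, ((wt (u + lam • w) : ZMod q)) = (d : ZMod q) := by
      intro lam hlam
      rw [hSf, Finset.mem_filter] at hlam
      exact (hw (u + lam • w)).resolve_left hlam.2
    have hmul : ((Sf.card : ℕ) : ZMod q) * (d : ZMod q) = 0 := by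
      rw [← hksum, hsum2, Finset.sum_congr rfl hterm, Finset.sum_const, nsmul_eq_mul]
    obtain ⟨du, hdu⟩ := (ZMod.isUnit_iff_coprime d q).2 hgcd
    rw [← hdu] at hmul
    have hSf0 : ((Sf.card : ℕ) : ZMod q) = 0 := (Units.mul_left_eq_zero du).1 hmul
    have hdvd : q ∣ Sf.card := (ZMod.natCast_eq_zero_iff _ _).1 hSf0
    have h0notin : (0 : F) ∉ Sf := by
      rw [hSf, Finset.mem_filter]
      rintro ⟨-, h⟩
      apply h
      rw [zero_smul, add_zero]
      exact hu
    have hlt : Sf.card < q := by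
      have hss : Sf ⊂ Finset.univ := by
        rw [Finset.ssubset_univ_iff]
        intro h
        exact h0notin (h ▸ Finset.mem_univ 0)
      have := Finset.card_lt_card hss
      rwa [Finset.card_univ, hq] at this
    have hcard0 : Sf.card = 0 := by
      rcases hdvd with ⟨c, hc⟩
      rcases Nat.eq_zero_or_pos c with rfl | hcpos
      · omega
      · nlinarith
    have h1in : (1 : F) ∈ Sf := by
      rw [hSf, Finset.mem_filter]
      refine ⟨Finset.mem_univ _, ?_⟩
      rwa [one_smul]
    rw [Finset.card_eq_zero] at hcard0
    rw [hcard0] at h1in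
    exact absurd h1in (Finset.notMem_empty 1)
  have hsmul : ∀ (c : F) {u : Fin k → F}, (wt u : ZMod q) = 0 → (wt (c • u) : ZMod q) = 0 := by
    intro c u hu
    by_cases hc : c = 0
    · rw [hc, zero_smul]
      rw [hwt0]
      simp
    · have heq : wt (c • u) = wt u := by
        show hammingNorm (Matrix.vecMul (c • u) G) = hammingNorm (Matrix.vecMul u G)
        rw [Matrix.smul_vecMul]
        exact hammingNorm_smul (fun i => fun x y h => by
          simpa [smul_eq_mul] using mul_left_cancel₀ hc (by simpa [smul_eq_mul] using h)) _
      rw [heq]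
      exact hu
  set W0 : Submodule F (Fin k → F) :=
    { carrier := {v | (wt v : ZMod q) = 0}
      add_mem' := fun hu hv => hadd hu hv
      zero_mem' := by
        show ((wt 0 : ℕ) : ZMod q) = 0
        rw [hwt0]; simp
      smul_mem' := fun c u hu => hsmul c hu } with hW0def
  have memW0 : ∀ v, v ∈ W0 ↔ (wt v : ZMod q) = 0 := fun v => Iff.rfl
  obtain ⟨v0, hv0ne, hv0wt⟩ := hex
  have hv0wt' : wt v0 = d := hv0wt
  have hv0notin : v0 ∉ W0 := by
    rw [memW0, hv0wt']
    exact hd0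
  have hcoset : ∀ u : Fin k → F, ∃ lam : F, (wt (u + lam • v0) : ZMod q) = 0 := by
    intro u
    by_contra h
    push_neg at h
    have hterm : ∀ lam : F, ((wt (u + lam • v0) : ZMod q)) = (d : ZMod q) := fun lam =>
      (hw _).resolve_left (h lam)
    have hk := key u v0
    rw [hv0wt'] at hk
    rw [Finset.sum_congr rfl (fun lam _ => hterm lam), Finset.sum_const, Finset.card_univ, hq,
      nsmul_eq_mul, ZMod.natCast_self, zero_mul] at hk
    exact hd0 (neg_eq_zero.1 hk.symm)
  have hcompl : IsCompl (Submodule.span F {v0}) W0 := by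
    constructor
    · rw [disjoint_comm]
      exact Submodule.disjoint_span_singleton.2 (fun h => absurd h hv0notin)
    · rw [codisjoint_iff, eq_top_iff]
      intro u _
      obtain ⟨lam, hlam⟩ := hcoset u
      have hu : u = (-lam) • v0 + (u + lam • v0) := by
        rw [neg_smul]
        abel
      rw [hu]
      exact Submodule.add_mem_sup
        (Submodule.smul_mem _ _ (Submodule.mem_span_singleton_self v0)) hlam
  set π := Submodule.linearProjOfIsCompl _ _ hcompl with hπ
  have hker : ∀ u, π u = 0 ↔ u ∈ W0 := fun u =>
    Submodule.linearProjOfIsCompl_apply_eq_zero_iff hcompl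
  obtain ⟨j0, hj0⟩ := Function.ne_iff.1 hv0ne
  have hj0' : v0 j0 ≠ 0 := by simpa using hj0
  set x : Fin k → F := fun i => ((π (Pi.single i 1) : Fin k → F)) j0 with hx
  have hdot : ∀ v : Fin k → F, v ⬝ᵥ x = ((π v : Fin k → F)) j0 := by
    intro v
    have hv : v = ∑ i, v i • (Pi.single i 1 : Fin k → F) := by
      conv_lhs => rw [← Finset.univ_sum_single v]
      exact Finset.sum_congr rfl fun i _ => by simp [← Pi.single_smul]
    calc v ⬝ᵥ x = ∑ i, v i * ((π (Pi.single i 1) : Fin k → F)) j0 := rfl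
      _ = (((∑ i, v i • π (Pi.single i 1) : Submodule.span F {v0}) : Fin k → F)) j0 := by
          push_cast
          rw [Finset.sum_apply]
          simp
      _ = ((π v : Fin k → F)) j0 := by
          conv_rhs => rw [hv]
          rw [map_sum]
          simp [_root_.map_smul]
  have hx0 : ∀ v : Fin k → F, v ⬝ᵥ x = 0 ↔ v ∈ W0 := by
    intro v
    rw [hdot, ← hker v]
    constructor
    · intro h
      obtain ⟨c, hc⟩ := Submodule.mem_span_singleton.1 (π v).2
      have hc' : ((π v : Fin k → F)) = c • v0 := hc.symm
      rw [hc'] at h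
      have : c = 0 := by
        have := h
        simp only [Pi.smul_apply, smul_eq_mul] at this
        exact (mul_eq_zero.1 this).resolve_right hj0'
      have : ((π v : Fin k → F)) = 0 := by rw [hc', this, zero_smul]
      exact Subtype.ext this
    · intro h
      rw [h]
      simp
  have hsplit : ∀ v : Fin k → F,
      hammingNorm (Matrix.vecMul v (Matrix.fromCols G (Matrix.replicateCol (Fin 1) x)))
        = wt v + (if v ⬝ᵥ x = 0 then 0 else 1) := by
    intro v
    rw [show Matrix.vecMul v (Matrix.fromCols G (Matrix.replicateCol (Fin 1) x))
        = Sum.elim (Matrix.vecMul v G) (Matrix.vecMul v (Matrix.replicateCol (Fin 1) x)) from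
      Matrix.vecMul_fromCols _ _ _, hammingNorm_sum_elim']
    congr 1
    have hcol : Matrix.vecMul v (Matrix.replicateCol (Fin 1) x) = fun _ => v ⬝ᵥ x := by
      ext j
      simp [Matrix.vecMul, Matrix.replicateCol, dotProduct]
    rw [hcol, hammingNorm_eq_sum']
    by_cases h : v ⬝ᵥ x = 0 <;> simp [h]
  refine ⟨x, ?_, ?_, ?_, ?_⟩
  · rw [Fintype.linearIndependent_iff] at hG ⊢
    intro g hg
    apply hG
    funext j
    have := congrFun hg (Sum.inl j)
    simpa [Finset.sum_apply, Matrix.fromCols] using this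
  · intro v hv
    rw [hsplit v]
    by_cases hmem : v ∈ W0
    · rw [if_pos ((hx0 v).2 hmem), add_zero]
      have h1 : d ≤ wt v := hmin v hv
      have h2 : wt v ≠ d := by
        intro h
        apply hd0
        rw [← h]
        exact hmem
      omega
    · rw [if_neg (fun h => hmem ((hx0 v).1 h))]
      have h1 : d ≤ wt v := hmin v hv
      omega
  · refine ⟨v0, hv0ne, ?_⟩
    rw [hsplit v0, if_neg (fun h => hv0notin ((hx0 v0).1 h)), hv0wt']
  · intro v
    rw [hsplit v]
    by_cases hmem : v ∈ W0
    · left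
      rw [if_pos ((hx0 v).2 hmem), add_zero]
      have : (wt v : ZMod q) = ((0:ℕ) : ZMod q) := by simpa using (memW0 v).1 hmem
      exact (ZMod.natCast_eq_natCast_iff _ _ _).1 this
    · right
      rw [if_neg (fun h => hmem ((hx0 v).1 h))]
      have hvd : wt v ≡ d [MOD q] := by
        rcases hwts v with h | h
        · exfalso
          apply hmem
          rw [memW0]
          have := (ZMod.natCast_eq_natCast_iff _ _ _).2 h
          simpa using this
        · exact h
      exact Nat.ModEq.add_right 1 hvd
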